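/- If φ ∈ F(M)** is normal, then φ = Σ_{n∈ℤ} φ ∘ W_{Λ_n} = lim_{n→∞} φ ∘ W_{Π_n}, where the limit is in the norm of F(M)**. -/

import Mathlib

open Filter Metric Topology NNReal


/-- The set of Lipschitz functions `M → ℝ` vanishing at the base point, as a
submodule of `M → ℝ`. -/
def Lip0Sub (M : Type*) [MetricSpace M] (base : M) : Submodule ℝ (M → ℝ) where
  carrier := {f | (∃ K, LipschitzWith K f) ∧ f base = 0}
  add_mem' := by
    rintro f g ⟨⟨Kf, hf⟩, hf0⟩ ⟨⟨Kg, hg⟩, hg0⟩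
    exact ⟨⟨Kf + Kg, hf.add hg⟩, by simp [Pi.add_apply, hf0, hg0]⟩
  zero_mem' := ⟨⟨0, LipschitzWith.const 0⟩, rfl⟩
  smul_mem' := by
    rintro c f ⟨⟨Kf, hf⟩, hf0⟩
    exact ⟨⟨‖c‖₊ * Kf, (lipschitzWith_smul c).comp hf⟩, by simp [Pi.smul_apply, hf0]⟩

/-- The space `Lip₀(M)` of Lipschitz functions vanishing at the base point.
(A type synonym, so that it carries the Lipschitz-norm topology rather than the
topology of pointwise convergence.) -/
def Lip0 (M : Type*) [MetricSpace M] (base : M) : Type _ := ↥(Lip0Sub M base)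

variable {M : Type*} [MetricSpace M] {base : M}

instance : AddCommGroup (Lip0 M base) :=
  inferInstanceAs (AddCommGroup ↥(Lip0Sub M base))

noncomputable instance : Module ℝ (Lip0 M base) :=
  inferInstanceAs (Module ℝ ↥(Lip0Sub M base))

/-- An element of `Lip₀(M)` is a function on `M`. -/
instance : CoeFun (Lip0 M base) (fun _ => M → ℝ) :=
  ⟨fun f => (Subtype.val f : M → ℝ)⟩

theorem Lip0.prop (f : Lip0 M base) :
    (∃ K, LipschitzWith K (f : M → ℝ)) ∧ (f : M → ℝ) base = 0 :=
  Subtype.prop f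

/-- The quantity defining the Lipschitz norm. -/
noncomputable def Lip0.lipNorm (f : Lip0 M base) : ℝ :=
  ⨆ p : M × M, |f p.1 - f p.2| / dist p.1 p.2

theorem Lip0.ratio_le (f : Lip0 M base) {K : ℝ≥0} (hK : LipschitzWith K (f : M → ℝ))
    (p : M × M) : |f p.1 - f p.2| / dist p.1 p.2 ≤ K := by
  rcases eq_or_ne p.1 p.2 with h | h
  · simp [h, K.coe_nonneg]
  · rw [div_le_iff₀ (dist_pos.2 h)]
    simpa [Real.dist_eq] using hK.dist_le_mul p.1 p.2

theorem Lip0.bddAbove (f : Lip0 M base) :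
    BddAbove (Set.range fun p : M × M => |f p.1 - f p.2| / dist p.1 p.2) := by
  obtain ⟨K, hK⟩ := f.prop.1
  exact ⟨K, by rintro r ⟨p, rfl⟩; exact f.ratio_le hK p⟩

theorem Lip0.ratio_le_lipNorm (f : Lip0 M base) (p : M × M) :
    |f p.1 - f p.2| / dist p.1 p.2 ≤ f.lipNorm :=
  le_ciSup f.bddAbove p

theorem Lip0.lipNorm_nonneg (f : Lip0 M base) : 0 ≤ f.lipNorm := by
  have := f.ratio_le_lipNorm (base, base)
  simpa using this

/-- The Lipschitz norm on `Lip₀(M)`: the best Lipschitz constant,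
`‖f‖ = sup_{x ≠ y} |f x - f y| / d(x,y)`. -/
noncomputable instance Lip0.normedAddCommGroup :
    NormedAddCommGroup (Lip0 M base) :=
  AddGroupNorm.toNormedAddCommGroup
    { toFun := fun f => f.lipNorm
      map_zero' := by
        have h : ∀ p : M × M,
            |(0 : Lip0 M base) p.1 - (0 : Lip0 M base) p.2| / dist p.1 p.2 = 0 := by
          intro p
          show |(0:ℝ) - 0| / _ = 0
          simp
        haveI : Nonempty (M × M) := ⟨(base, base)⟩
        simp only [Lip0.lipNorm, h, ciSup_const]
      add_le' := by
        intro f g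
        haveI : Nonempty (M × M) := ⟨(base, base)⟩
        apply ciSup_le
        intro p
        rcases eq_or_ne p.1 p.2 with h | h
        · have : dist p.1 p.2 = 0 := by simp [h]
          rw [this, div_zero]
          exact add_nonneg f.lipNorm_nonneg g.lipNorm_nonneg
        · have hd : (0:ℝ) < dist p.1 p.2 := dist_pos.2 h
          have h1 : |(f + g) p.1 - (f + g) p.2| ≤ |f p.1 - f p.2| + |g p.1 - g p.2| := by
            show |(f p.1 + g p.1) - (f p.2 + g p.2)| ≤ _
            rw [add_sub_add_comm]
            exact abs_add_le _ _
          calc |(f + g) p.1 - (f + g) p.2| / dist p.1 p.2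
              ≤ (|f p.1 - f p.2| + |g p.1 - g p.2|) / dist p.1 p.2 := by gcongr
            _ ≤ f.lipNorm + g.lipNorm := by
                rw [add_div]
                exact add_le_add (f.ratio_le_lipNorm p) (g.ratio_le_lipNorm p)
      neg' := by
        intro f
        show Lip0.lipNorm _ = Lip0.lipNorm _
        unfold Lip0.lipNorm
        congr 1
        funext p
        show |(- f p.1) - (- f p.2)| / _ = _
        rw [neg_sub_neg, abs_sub_comm]
      eq_zero_of_map_eq_zero' := by
        intro f hf
        have hconst : ∀ x y : M, f x = f y := by
          intro x y
          rcases eq_or_ne x y with h | h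
          · rw [h]
          · have h1 : |f x - f y| / dist x y ≤ 0 := hf ▸ f.ratio_le_lipNorm (x, y)
            have h2 : (0:ℝ) ≤ |f x - f y| / dist x y :=
              div_nonneg (abs_nonneg _) dist_nonneg
            rcases div_eq_zero_iff.1 (le_antisymm h1 h2) with h3 | h3
            · exact sub_eq_zero.1 (abs_eq_zero.1 h3)
            · exact absurd h3 (dist_ne_zero.2 h)
        have hzero : ∀ x, f x = 0 := fun x => (hconst x base).trans f.prop.2
        exact Subtype.ext (funext hzero) }

noncomputable instance Lip0.normedSpace : NormedSpace ℝ (Lip0 M base) :=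
  { norm_smul_le := by
      intro c f
      haveI : Nonempty (M × M) := ⟨(base, base)⟩
      apply ciSup_le
      intro p
      have heq : |(c • f) p.1 - (c • f) p.2| / dist p.1 p.2
          = |c| * (|f p.1 - f p.2| / dist p.1 p.2) := by
        show |c * f p.1 - c * f p.2| / dist p.1 p.2 = _
        rw [← mul_sub, abs_mul, mul_div_assoc]
      rw [heq]
      calc |c| * (|f p.1 - f p.2| / dist p.1 p.2)
          ≤ |c| * f.lipNorm :=
            mul_le_mul_of_nonneg_left (f.ratio_le_lipNorm p) (abs_nonneg c)
        _ = ‖c‖ * ‖f‖ := rfl }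

/-- Evaluation functional `δ(x) ∈ Lip₀(M)*`. -/
noncomputable def deltaF (base : M) (x : M) : StrongDual ℝ (Lip0 M base) :=
  LinearMap.mkContinuous
    { toFun := fun f => f x
      map_add' := fun _ _ => rfl
      map_smul' := fun _ _ => rfl }
    (dist x base)
    (by
      intro f
      show |f x| ≤ dist x base * ‖f‖
      rcases eq_or_ne x base with h | h
      · simp [h, f.prop.2, mul_nonneg dist_nonneg f.lipNorm_nonneg]
      · have h1 : |f x - f base| / dist x base ≤ ‖f‖ := f.ratio_le_lipNorm (x, base)
        have h2 : |f x - f base| ≤ dist x base * ‖f‖ := by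
          rw [div_le_iff₀ (dist_pos.2 (by simpa using h))] at h1
          linarith [h1]
        simpa [f.prop.2] using h2)

/-- The Lipschitz-free space `F(M)`, realized as the closed linear span of the
evaluation functionals inside `Lip₀(M)*`. -/
noncomputable def FreeSpace (base : M) : Set (StrongDual ℝ (Lip0 M base)) :=
  closure ((Submodule.span ℝ (Set.range (deltaF base)) :
    Submodule ℝ (StrongDual ℝ (Lip0 M base))) : Set (StrongDual ℝ (Lip0 M base)))

/-- A functional `φ ∈ Lip₀(M)* = F(M)**` is *normal* if for every norm-bounded net
converging pointwise and monotonically to `f ∈ Lip₀(M)`, the values `φ(fᵢ)` converge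
to `φ(f)`. -/
def IsNormal (base : M) (φ : StrongDual ℝ (Lip0 M base)) : Prop :=
  ∀ (ι : Type) [Preorder ι] [Nonempty ι] [IsDirected ι (· ≤ ·)]
    (F : ι → Lip0 M base) (f : Lip0 M base) (C : ℝ),
    (∀ i, ‖F i‖ ≤ C) →
    ((∀ x, Monotone fun i => (F i) x) ∨ (∀ x, Antitone fun i => (F i) x)) →
    (∀ x, Tendsto (fun i => (F i) x) atTop (𝓝 (f x))) →
    Tendsto (fun i => φ (F i)) atTop (𝓝 (φ f))



variable {M : Type*} [MetricSpace M]

/-- The "tent" function `Λ_n`, supported on the annulus `2^(n-1) < d(x,0) < 2^(n+1)`,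
equal to `1` on the sphere `d(x,0) = 2^n` and affine in `d(x,0)` in between. -/
noncomputable def Lam (base : M) (n : ℤ) (x : M) : ℝ :=
  max 0 (min ((2:ℝ) ^ (1 - n) * dist x base - 1) (2 - (2:ℝ) ^ (-n) * dist x base))

/-- The "plateau" function `Π_n`, equal to `1` on the annulus `2^(-n) ≤ d(x,0) ≤ 2^n`,
vanishing for `d(x,0) ≤ 2^(-(n+1))` and `d(x,0) ≥ 2^(n+1)`, affine in between. -/
noncomputable def Pla (base : M) (n : ℕ) (x : M) : ℝ :=
  max 0 (min 1 (min ((2:ℝ) ^ ((n:ℤ) + 1) * dist x base - 1)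
    (2 - (2:ℝ) ^ (-(n:ℤ)) * dist x base)))

/-- The cutoff function `h_n`, equal to `1` on the ball `d(x,0) ≤ 2^n`, vanishing for
`d(x,0) ≥ 2^(n+1)`, and affine in `d(x,0)` in between. -/
noncomputable def hfun (base : M) (n : ℤ) (x : M) : ℝ :=
  max 0 (min 1 (2 - (2:ℝ) ^ (-n) * dist x base))


section Toolkit
variable {M : Type*} [MetricSpace M] {base : M}

lemma lip0_norm_def (f : Lip0 M base) : ‖f‖ = f.lipNorm := rfl

lemma lip0_dist_le (f : Lip0 M base) (x y : M) : |f x - f y| ≤ ‖f‖ * dist x y := by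
  rcases eq_or_ne x y with h | h
  · simp [h]
  · have h1 := f.ratio_le_lipNorm (x, y)
    have hd : (0:ℝ) < dist x y := dist_pos.2 h
    rw [div_le_iff₀ hd] at h1
    simpa [mul_comm, lip0_norm_def] using h1

lemma lip0_norm_le {f : Lip0 M base} {K : ℝ} (hK : 0 ≤ K)
    (h : ∀ x y, |f x - f y| ≤ K * dist x y) : ‖f‖ ≤ K := by
  haveI : Nonempty (M × M) := ⟨(base, base)⟩
  apply ciSup_le
  intro p
  rcases eq_or_ne p.1 p.2 with hp | hp
  · simp [hp, hK]
  · rw [div_le_iff₀ (dist_pos.2 hp)]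
    simpa [mul_comm] using h p.1 p.2

lemma lip0_val_le (f : Lip0 M base) (x : M) : |f x| ≤ ‖f‖ * dist x base := by
  have := lip0_dist_le f x base
  simpa [f.prop.2] using this

/-- Constructor for `Lip0` from a real Lipschitz bound. -/
noncomputable def lip0Mk (base : M) (F : M → ℝ) (K : ℝ)
    (h : ∀ x y, |F x - F y| ≤ K * dist x y) (h0 : F base = 0) : Lip0 M base :=
  ⟨F, ⟨⟨⟨max K 0, le_max_right _ _⟩, by
      apply LipschitzWith.of_dist_le_mul
      intro x y
      rw [Real.dist_eq]
      calc |F x - F y| ≤ K * dist x y := h x y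
        _ ≤ max K 0 * dist x y := by
            apply mul_le_mul_of_nonneg_right (le_max_left _ _) dist_nonneg⟩,
    h0⟩⟩

@[simp] lemma lip0Mk_apply (base : M) (F : M → ℝ) (K : ℝ) (h) (h0) (x : M) :
    (lip0Mk base F K h h0) x = F x := rfl

lemma lip0Mk_norm_le (base : M) (F : M → ℝ) (K : ℝ) (hK : 0 ≤ K) (h) (h0) :
    ‖lip0Mk base F K h h0‖ ≤ K :=
  lip0_norm_le hK h

@[simp] lemma lip0_add_apply (f g : Lip0 M base) (x : M) : (f + g) x = f x + g x := rfl
@[simp] lemma lip0_sub_apply (f g : Lip0 M base) (x : M) : (f - g) x = f x - g x := rfl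
@[simp] lemma lip0_neg_apply (f : Lip0 M base) (x : M) : (-f) x = -(f x) := rfl
@[simp] lemma lip0_smul_apply (c : ℝ) (f : Lip0 M base) (x : M) : (c • f) x = c * f x := rfl
@[simp] lemma lip0_zero_apply (x : M) : (0 : Lip0 M base) x = 0 := rfl

lemma lip0_ext {f g : Lip0 M base} (h : ∀ x, f x = g x) : f = g :=
  Subtype.ext (funext h)

@[simp] lemma deltaF_apply (x : M) (f : Lip0 M base) : deltaF base x f = f x := rfl

lemma lip0_sum_apply {ι : Type*} (s : Finset ι) (f : ι → Lip0 M base) (x : M) :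
    (∑ i ∈ s, f i) x = ∑ i ∈ s, f i x := by
  exact map_sum (deltaF base x) f s

end Toolkit
section RealCutoffs

/-- `Pla` as a function of the distance. -/
noncomputable def rPla (n : ℕ) (u : ℝ) : ℝ :=
  max 0 (min 1 (min ((2:ℝ) ^ ((n:ℤ) + 1) * u - 1) (2 - (2:ℝ) ^ (-(n:ℤ)) * u)))

/-- `Lam` as a function of the distance. -/
noncomputable def rLam (j : ℤ) (u : ℝ) : ℝ :=
  max 0 (min ((2:ℝ) ^ (1 - j) * u - 1) (2 - (2:ℝ) ^ (-j) * u))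

variable {M : Type*} [MetricSpace M] {base : M}

lemma Pla_eq (n : ℕ) (x : M) : Pla base n x = rPla n (dist x base) := rfl
lemma Lam_eq (j : ℤ) (x : M) : Lam base j x = rLam j (dist x base) := rfl

lemma two_zpow_pos (j : ℤ) : (0:ℝ) < 2 ^ j := zpow_pos (by norm_num) j

lemma rPla_nonneg (n : ℕ) (u : ℝ) : 0 ≤ rPla n u := le_max_left _ _

lemma rPla_le_one (n : ℕ) (u : ℝ) : rPla n u ≤ 1 :=
  max_le zero_le_one (min_le_left _ _)

lemma rPla_eq_one {n : ℕ} {u : ℝ} (h1 : (2:ℝ) ^ (-(n:ℤ)) ≤ u) (h2 : u ≤ (2:ℝ) ^ (n:ℤ)) :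
    rPla n u = 1 := by
  have ha : (1:ℝ) ≤ (2:ℝ) ^ ((n:ℤ) + 1) * u - 1 := by
    have key : (2:ℝ) ^ ((n:ℤ) + 1) * (2:ℝ) ^ (-(n:ℤ)) = 2 := by
      rw [← zpow_add₀ (by norm_num : (2:ℝ) ≠ 0)]; norm_num
    have := mul_le_mul_of_nonneg_left h1 (two_zpow_pos ((n:ℤ)+1)).le
    rw [key] at this
    linarith
  have hb : (1:ℝ) ≤ 2 - (2:ℝ) ^ (-(n:ℤ)) * u := by
    have key : (2:ℝ) ^ (-(n:ℤ)) * (2:ℝ) ^ ((n:ℤ)) = 1 := by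
      rw [← zpow_add₀ (by norm_num : (2:ℝ) ≠ 0)]; norm_num
    have := mul_le_mul_of_nonneg_left h2 (two_zpow_pos (-(n:ℤ))).le
    rw [key] at this
    linarith
  rw [rPla, min_eq_left (le_min ha hb)]
  simp

lemma rPla_eq_zero_left {n : ℕ} {u : ℝ} (h : u ≤ (2:ℝ) ^ (-(n:ℤ) - 1)) :
    rPla n u = 0 := by
  have ha : (2:ℝ) ^ ((n:ℤ) + 1) * u - 1 ≤ 0 := by
    have key : (2:ℝ) ^ ((n:ℤ) + 1) * (2:ℝ) ^ (-(n:ℤ) - 1) = 1 := by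
      rw [← zpow_add₀ (by norm_num : (2:ℝ) ≠ 0)]; norm_num
    have := mul_le_mul_of_nonneg_left h (two_zpow_pos ((n:ℤ)+1)).le
    rw [key] at this
    linarith
  apply max_eq_left
  calc min 1 (min ((2:ℝ) ^ ((n:ℤ) + 1) * u - 1) (2 - (2:ℝ) ^ (-(n:ℤ)) * u))
      ≤ (2:ℝ) ^ ((n:ℤ) + 1) * u - 1 := (min_le_right _ _).trans (min_le_left _ _)
    _ ≤ 0 := ha

lemma rPla_eq_zero_right {n : ℕ} {u : ℝ} (h : (2:ℝ) ^ ((n:ℤ) + 1) ≤ u) :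
    rPla n u = 0 := by
  have hb : 2 - (2:ℝ) ^ (-(n:ℤ)) * u ≤ 0 := by
    have key : (2:ℝ) ^ (-(n:ℤ)) * (2:ℝ) ^ ((n:ℤ) + 1) = 2 := by
      rw [← zpow_add₀ (by norm_num : (2:ℝ) ≠ 0)]; norm_num
    have := mul_le_mul_of_nonneg_left h (two_zpow_pos (-(n:ℤ))).le
    rw [key] at this
    linarith
  apply max_eq_left
  calc min 1 (min ((2:ℝ) ^ ((n:ℤ) + 1) * u - 1) (2 - (2:ℝ) ^ (-(n:ℤ)) * u))
      ≤ 2 - (2:ℝ) ^ (-(n:ℤ)) * u := (min_le_right _ _).trans (min_le_right _ _)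
    _ ≤ 0 := hb

lemma rPla_mono {u : ℝ} (hu : 0 ≤ u) : Monotone fun n : ℕ => rPla n u := by
  apply monotone_nat_of_le_succ
  intro n
  apply max_le_max le_rfl
  apply min_le_min le_rfl
  apply min_le_min
  · have : (2:ℝ) ^ ((n:ℤ) + 1) ≤ (2:ℝ) ^ (((n+1:ℕ):ℤ) + 1) := by
      apply zpow_le_zpow_right₀ (by norm_num)
      push_cast; omega
    nlinarith [mul_le_mul_of_nonneg_right this hu]
  · have : (2:ℝ) ^ (-((n+1:ℕ):ℤ)) ≤ (2:ℝ) ^ (-(n:ℤ)) := by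
      apply zpow_le_zpow_right₀ (by norm_num)
      push_cast; omega
    nlinarith [mul_le_mul_of_nonneg_right this hu]

end RealCutoffs
section RealCutoffs2

lemma zpow_two_mul_eq (x y : ℤ) : (2:ℝ) ^ x * (2:ℝ) ^ y = (2:ℝ) ^ (x + y) :=
  (zpow_add₀ (by norm_num : (2:ℝ) ≠ 0) x y).symm

lemma rPla_eq_b {n : ℕ} {u : ℝ} (h : (2:ℝ) ^ (-(n:ℤ)) ≤ u) :
    rPla n u = max 0 (min 1 (2 - (2:ℝ) ^ (-(n:ℤ)) * u)) := by
  have hA : (1:ℝ) ≤ (2:ℝ) ^ ((n:ℤ) + 1) * u - 1 := by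
    have key := zpow_two_mul_eq ((n:ℤ)+1) (-(n:ℤ))
    have := mul_le_mul_of_nonneg_left h (two_zpow_pos ((n:ℤ)+1)).le
    rw [key] at this
    norm_num at this
    linarith
  rw [rPla, ← min_assoc, min_eq_left hA]

lemma rPla_osc (n : ℕ) {s t : ℝ} (hs : 0 ≤ s) (hst : s ≤ t) :
    |rPla n t - rPla n s| * s ≤ 2 * (t - s) := by
  have hts : (0:ℝ) ≤ t - s := by linarith
  set a := (2:ℝ) ^ ((n:ℤ) + 1) with ha
  set b := (2:ℝ) ^ (-(n:ℤ)) with hb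
  have hap : (0:ℝ) < a := two_zpow_pos _
  have hbp : (0:ℝ) < b := two_zpow_pos _
  have hp : a * (2:ℝ) ^ (-(n:ℤ) - 1) = 1 := by
    rw [ha, zpow_two_mul_eq]; norm_num
  have hppos : (0:ℝ) < (2:ℝ) ^ (-(n:ℤ) - 1) := two_zpow_pos _
  rcases le_or_gt s ((2:ℝ) ^ (-(n:ℤ) - 1)) with hcase1 | hcase1
  · -- s below the support
    rw [rPla_eq_zero_left hcase1, sub_zero, abs_of_nonneg (rPla_nonneg _ _)]
    rcases le_or_gt (a * t - 1) 0 with hc | hc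
    · have : rPla n t = 0 := by
        apply max_eq_left
        calc min 1 (min (a * t - 1) (2 - b * t)) ≤ a * t - 1 :=
          (min_le_right _ _).trans (min_le_left _ _)
        _ ≤ 0 := hc
      rw [this]; nlinarith
    · have h1 : rPla n t ≤ a * t - 1 := by
        apply max_le _ ((min_le_right _ _).trans (min_le_left _ _))
        linarith
      have h2 : rPla n t * s ≤ (a * t - 1) * s :=
        mul_le_mul_of_nonneg_right h1 hs
      have h3 : (a * t - 1) * s ≤ (a * t - 1) * (2:ℝ) ^ (-(n:ℤ) - 1) :=
        mul_le_mul_of_nonneg_left hcase1 hc.le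
      have h4 : (a * t - 1) * (2:ℝ) ^ (-(n:ℤ) - 1) = t - (2:ℝ) ^ (-(n:ℤ) - 1) := by
        rw [show (a * t - 1) * (2:ℝ) ^ (-(n:ℤ) - 1)
            = (a * (2:ℝ) ^ (-(n:ℤ) - 1)) * t - (2:ℝ) ^ (-(n:ℤ) - 1) from by ring, hp,
          one_mul]
      nlinarith
  · rcases le_or_gt ((2:ℝ) ^ ((n:ℤ) + 1)) s with hcase2 | hcase2
    · -- s to the right of the support
      rw [rPla_eq_zero_right hcase2, rPla_eq_zero_right (hcase2.trans hst)]
      simpa using by nlinarith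
    · rcases le_or_gt s ((2:ℝ) ^ (-(n:ℤ))) with hcase3 | hcase3
      · -- middle-left : a * s ≤ 2
        have has : a * s ≤ 2 := by
          have key : a * (2:ℝ) ^ (-(n:ℤ)) = 2 := by
            rw [ha, zpow_two_mul_eq]; norm_num
          have : a * s ≤ a * (2:ℝ) ^ (-(n:ℤ)) := mul_le_mul_of_nonneg_left hcase3 hap.le
          rw [key] at this
          linarith
        have hlip : |rPla n t - rPla n s| ≤ a * (t - s) := by
          have h1 : |rPla n t - rPla n s| ≤
              |min 1 (min (a*t-1) (2-b*t)) - min 1 (min (a*s-1) (2-b*s))| := by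
            rw [rPla, rPla, max_comm 0 (min 1 (min (a*t-1) (2-b*t))),
              max_comm 0 (min 1 (min (a*s-1) (2-b*s)))]
            exact abs_max_sub_max_le_abs _ _ _
          have h2 : |min 1 (min (a*t-1) (2-b*t)) - min 1 (min (a*s-1) (2-b*s))| ≤
              max |(1:ℝ) - 1| |min (a*t-1) (2-b*t) - min (a*s-1) (2-b*s)| :=
            abs_min_sub_min_le_max _ _ _ _
          have h3 : |min (a*t-1) (2-b*t) - min (a*s-1) (2-b*s)| ≤
              max |(a*t-1) - (a*s-1)| |(2-b*t) - (2-b*s)| :=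
            abs_min_sub_min_le_max _ _ _ _
          have hba : b ≤ a := by
            rw [ha, hb]
            apply zpow_le_zpow_right₀ (by norm_num)
            omega
          have h4 : |(a*t-1) - (a*s-1)| = a * (t - s) := by
            rw [show (a*t-1) - (a*s-1) = a * (t-s) by ring,
              abs_of_nonneg (by positivity)]
          have h5 : |(2-b*t) - (2-b*s)| = b * (t - s) := by
            rw [show (2-b*t) - (2-b*s) = -(b * (t-s)) by ring, abs_neg,
              abs_of_nonneg (by positivity)]
          have h6 : max |(a*t-1) - (a*s-1)| |(2-b*t) - (2-b*s)| ≤ a * (t-s) := by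
            rw [h4, h5]
            exact max_le le_rfl (by nlinarith)
          calc |rPla n t - rPla n s| ≤ _ := h1
            _ ≤ _ := h2
            _ ≤ a * (t - s) := by
                apply max_le _ (h3.trans h6)
                simp [hts]; positivity
        calc |rPla n t - rPla n s| * s ≤ (a * (t-s)) * s :=
            mul_le_mul_of_nonneg_right hlip hs
          _ = (a * s) * (t - s) := by ring
          _ ≤ 2 * (t - s) := mul_le_mul_of_nonneg_right has hts
      · -- middle-right : use the b-side form, b * s ≤ 2
        have hbs : b * s ≤ 2 := by
          have key : b * (2:ℝ) ^ ((n:ℤ)+1) = 2 := by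
            rw [hb, zpow_two_mul_eq]; norm_num
          have : b * s ≤ b * (2:ℝ) ^ ((n:ℤ)+1) := mul_le_mul_of_nonneg_left hcase2.le hbp.le
          rw [key] at this
          linarith
        have hform : ∀ u : ℝ, (2:ℝ) ^ (-(n:ℤ)) ≤ u →
            rPla n u = max 0 (min 1 (2 - b * u)) := fun u hu => rPla_eq_b hu
        rw [hform s hcase3.le, hform t (hcase3.le.trans hst)]
        have h1 : |max 0 (min 1 (2 - b*t)) - max 0 (min 1 (2 - b*s))| ≤ b * (t - s) := by
          have h2 : |max 0 (min 1 (2 - b*t)) - max 0 (min 1 (2 - b*s))| ≤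
              |min 1 (2 - b*t) - min 1 (2 - b*s)| := by
            rw [max_comm 0 (min 1 (2 - b*t)), max_comm 0 (min 1 (2 - b*s))]
            exact abs_max_sub_max_le_abs _ _ _
          have h3 : |min 1 (2 - b*t) - min 1 (2 - b*s)| ≤
              max |(1:ℝ) - 1| |(2-b*t) - (2-b*s)| := abs_min_sub_min_le_max _ _ _ _
          have h5 : |(2-b*t) - (2-b*s)| = b * (t - s) := by
            rw [show (2-b*t) - (2-b*s) = -(b * (t-s)) by ring, abs_neg,
              abs_of_nonneg (by positivity)]
          calc _ ≤ _ := h2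
            _ ≤ _ := h3
            _ ≤ b * (t-s) := by rw [h5]; apply max_le _ le_rfl; simp; positivity
        calc _ ≤ (b * (t-s)) * s := mul_le_mul_of_nonneg_right h1 hs
          _ = (b * s) * (t-s) := by ring
          _ ≤ 2 * (t-s) := mul_le_mul_of_nonneg_right hbs hts

end RealCutoffs2
section TentLemmas

lemma rLam_nonneg (j : ℤ) (u : ℝ) : 0 ≤ rLam j u := le_max_left _ _

lemma rLam_le_one (j : ℤ) {u : ℝ} (hu : 0 ≤ u) : rLam j u ≤ 1 := by
  rcases le_or_gt u ((2:ℝ) ^ j) with h | h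
  · apply max_le zero_le_one
    apply (min_le_left _ _).trans
    have key : (2:ℝ) ^ (1 - j) * (2:ℝ) ^ j = 2 := by rw [zpow_two_mul_eq]; norm_num
    have := mul_le_mul_of_nonneg_left h (two_zpow_pos (1-j)).le
    rw [key] at this
    linarith
  · apply max_le zero_le_one
    apply (min_le_right _ _).trans
    have key : (2:ℝ) ^ (-j) * (2:ℝ) ^ j = 1 := by rw [zpow_two_mul_eq]; norm_num
    have := mul_le_mul_of_nonneg_left h.le (two_zpow_pos (-j)).le
    rw [key] at this
    linarith

lemma rLam_zero_left {j : ℤ} {u : ℝ} (h : u ≤ (2:ℝ) ^ (j - 1)) : rLam j u = 0 := by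
  apply max_eq_left
  apply (min_le_left _ _).trans
  have key : (2:ℝ) ^ (1 - j) * (2:ℝ) ^ (j - 1) = 1 := by rw [zpow_two_mul_eq]; norm_num
  have := mul_le_mul_of_nonneg_left h (two_zpow_pos (1-j)).le
  rw [key] at this
  linarith

lemma rLam_zero_right {j : ℤ} {u : ℝ} (h : (2:ℝ) ^ (j + 1) ≤ u) : rLam j u = 0 := by
  apply max_eq_left
  apply (min_le_right _ _).trans
  have key : (2:ℝ) ^ (-j) * (2:ℝ) ^ (j + 1) = 2 := by rw [zpow_two_mul_eq]; norm_num
  have := mul_le_mul_of_nonneg_left h (two_zpow_pos (-j)).le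
  rw [key] at this
  linarith

lemma rLam_lip (j : ℤ) {s t : ℝ} (hst : s ≤ t) :
    |rLam j t - rLam j s| ≤ (2:ℝ) ^ (1 - j) * (t - s) := by
  have hts : (0:ℝ) ≤ t - s := by linarith
  have h1 : |rLam j t - rLam j s| ≤
      |min ((2:ℝ)^(1-j)*t-1) (2-(2:ℝ)^(-j)*t) - min ((2:ℝ)^(1-j)*s-1) (2-(2:ℝ)^(-j)*s)| := by
    rw [rLam, rLam, max_comm 0 (min ((2:ℝ)^(1-j)*t-1) (2-(2:ℝ)^(-j)*t)),
      max_comm 0 (min ((2:ℝ)^(1-j)*s-1) (2-(2:ℝ)^(-j)*s))]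
    exact abs_max_sub_max_le_abs _ _ _
  have h2 := abs_min_sub_min_le_max ((2:ℝ)^(1-j)*t-1) (2-(2:ℝ)^(-j)*t)
    ((2:ℝ)^(1-j)*s-1) (2-(2:ℝ)^(-j)*s)
  have h4 : |((2:ℝ)^(1-j)*t-1) - ((2:ℝ)^(1-j)*s-1)| = (2:ℝ)^(1-j) * (t - s) := by
    rw [show ((2:ℝ)^(1-j)*t-1) - ((2:ℝ)^(1-j)*s-1) = (2:ℝ)^(1-j) * (t-s) from by ring,
      abs_of_nonneg (by positivity)]
  have h5 : |(2-(2:ℝ)^(-j)*t) - (2-(2:ℝ)^(-j)*s)| = (2:ℝ)^(-j) * (t - s) := by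
    rw [show (2-(2:ℝ)^(-j)*t) - (2-(2:ℝ)^(-j)*s) = -((2:ℝ)^(-j) * (t-s)) from by ring,
      abs_neg, abs_of_nonneg (by positivity)]
  have hba : (2:ℝ)^(-j) ≤ (2:ℝ)^(1-j) := by
    apply zpow_le_zpow_right₀ (by norm_num); omega
  refine h1.trans (h2.trans ?_)
  rw [h4, h5]
  exact max_le le_rfl (by nlinarith)

lemma rLam_pair {k : ℤ} {u : ℝ} (h1 : (2:ℝ) ^ k ≤ u) (h2 : u ≤ (2:ℝ) ^ (k + 1)) :
    rLam k u + rLam (k + 1) u = 1 := by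
  have key1 : (2:ℝ) ^ (1 - k) * (2:ℝ) ^ k = 2 := by rw [zpow_two_mul_eq]; norm_num
  have key2 : (2:ℝ) ^ (-k) * (2:ℝ) ^ (k + 1) = 2 := by rw [zpow_two_mul_eq]; norm_num
  have key3 : (2:ℝ) ^ (-(k+1)) * (2:ℝ) ^ (k + 1) = 1 := by
    rw [zpow_two_mul_eq, show -(k+1) + (k+1) = 0 from by ring, zpow_zero]
  have key4 : (2:ℝ) ^ (-k) * (2:ℝ) ^ k = 1 := by rw [zpow_two_mul_eq]; norm_num
  have e1 := mul_le_mul_of_nonneg_left h1 (two_zpow_pos (1-k)).le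
  rw [key1] at e1
  have e2 := mul_le_mul_of_nonneg_left h2 (two_zpow_pos (-k)).le
  rw [key2] at e2
  have e3 := mul_le_mul_of_nonneg_left h2 (two_zpow_pos (-(k+1))).le
  rw [key3] at e3
  have e4 := mul_le_mul_of_nonneg_left h1 (two_zpow_pos (-k)).le
  rw [key4] at e4
  have eA : rLam k u = 2 - (2:ℝ)^(-k) * u := by
    rw [rLam, min_eq_right (by linarith), max_eq_right (by linarith)]
  have eB : rLam (k+1) u = (2:ℝ)^(-k) * u - 1 := by
    have hexp : (1 : ℤ) - (k+1) = -k := by ring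
    rw [rLam, hexp, min_eq_left (by linarith), max_eq_right (by linarith)]
  rw [eA, eB]
  ring

lemma geom_sum_le (T : Finset ℤ) (L : ℤ) (hT : ∀ j ∈ T, L ≤ j) :
    ∑ j ∈ T, (2:ℝ) ^ (L - j) ≤ 2 := by
  have hcast : ∀ j ∈ T, (2:ℝ) ^ (L - j) = ((1:ℝ)/2) ^ ((j - L).toNat) := by
    intro j hj
    have hnn : (0:ℤ) ≤ j - L := by have := hT j hj; omega
    calc (2:ℝ) ^ (L - j) = ((2:ℝ) ^ (((j - L).toNat : ℤ)))⁻¹ := by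
          rw [← zpow_neg]; congr 1; omega
      _ = ((2:ℝ) ^ ((j - L).toNat))⁻¹ := by rw [zpow_natCast]
      _ = ((1:ℝ)/2) ^ ((j - L).toNat) := by rw [one_div, inv_pow]
  rw [Finset.sum_congr rfl hcast]
  have hinj : ∀ x ∈ T, ∀ y ∈ T, (x - L).toNat = (y - L).toNat → x = y := by
    intro x hx y hy h
    have hx' := hT x hx; have hy' := hT y hy
    omega
  rw [← Finset.sum_image (f := fun i : ℕ => ((1:ℝ)/2) ^ i) hinj]
  calc ∑ i ∈ T.image (fun j => (j - L).toNat), ((1:ℝ)/2) ^ i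
      ≤ ∑' i : ℕ, ((1:ℝ)/2) ^ i :=
        summable_geometric_two.sum_le_tsum _ (fun i _ => by positivity)
    _ = 2 := tsum_geometric_two

end TentLemmas
section TentSum

lemma gammaS_nonneg (S : Finset ℤ) {u : ℝ} : 0 ≤ ∑ j ∈ S, rLam j u :=
  Finset.sum_nonneg fun j _ => rLam_nonneg j u

lemma gammaS_le_one (S : Finset ℤ) {u : ℝ} (hu : 0 ≤ u) : ∑ j ∈ S, rLam j u ≤ 1 := by
  rcases eq_or_lt_of_le hu with h0 | h0
  · have : ∀ j ∈ S, rLam j u = 0 := fun j _ =>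
      rLam_zero_left (by rw [← h0]; exact (two_zpow_pos (j-1)).le)
    rw [Finset.sum_eq_zero this]; norm_num
  · set k := Int.log 2 u with hk
    have hk1 : (2:ℝ) ^ k ≤ u := by
      have := Int.zpow_log_le_self (b := 2) (by norm_num) h0
      push_cast at this; exact this
    have hk2 : u < (2:ℝ) ^ (k + 1) := by
      have := Int.lt_zpow_succ_log_self (b := 2) (by norm_num) u
      push_cast at this; exact this
    have hvan : ∀ j ∈ S, j ∉ S ∩ ({k, k+1} : Finset ℤ) → rLam j u = 0 := by
      intro j hj hj'
      have hne : j ≠ k ∧ j ≠ k + 1 := by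
        constructor <;> (rintro rfl; exact hj' (Finset.mem_inter.2 ⟨hj, by simp⟩))
      rcases lt_or_gt_of_ne hne.1 with h | h
      · apply rLam_zero_right
        calc (2:ℝ) ^ (j+1) ≤ (2:ℝ) ^ k := zpow_le_zpow_right₀ (by norm_num) (by omega)
          _ ≤ u := hk1
      · apply rLam_zero_left
        have : k + 2 ≤ j := by omega
        calc u ≤ (2:ℝ) ^ (k+1) := hk2.le
          _ ≤ (2:ℝ) ^ (j-1) := zpow_le_zpow_right₀ (by norm_num) (by omega)
    rw [← Finset.sum_subset Finset.inter_subset_left hvan]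
    calc ∑ j ∈ S ∩ {k, k+1}, rLam j u
        ≤ ∑ j ∈ ({k, k+1} : Finset ℤ), rLam j u :=
          Finset.sum_le_sum_of_subset_of_nonneg Finset.inter_subset_right
            (fun j _ _ => rLam_nonneg j u)
      _ = rLam k u + rLam (k+1) u := Finset.sum_pair (by omega)
      _ = 1 := rLam_pair hk1 hk2.le

lemma gammaS_eq_one {S : Finset ℤ} {N : ℕ} (hN : 1 ≤ N)
    (hsub : Finset.Icc (-(N:ℤ)) (N:ℤ) ⊆ S) {u : ℝ}
    (h1 : (2:ℝ) ^ (-(N:ℤ)) ≤ u) (h2 : u ≤ (2:ℝ) ^ (N:ℤ)) :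
    ∑ j ∈ S, rLam j u = 1 := by
  have hu : 0 < u := lt_of_lt_of_le (two_zpow_pos _) h1
  refine le_antisymm (gammaS_le_one S hu.le) ?_
  have hlog1 : (2:ℝ) ^ (Int.log 2 u) ≤ u := by
    have := Int.zpow_log_le_self (b := 2) (by norm_num) hu
    push_cast at this; exact this
  have hlog2 : u < (2:ℝ) ^ (Int.log 2 u + 1) := by
    have := Int.lt_zpow_succ_log_self (b := 2) (by norm_num) u
    push_cast at this; exact this
  have hloglb : -(N:ℤ) ≤ Int.log 2 u :=
    (Int.zpow_le_iff_le_log (by norm_num) hu).1 (by push_cast; exact h1)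
  have hkey : ∃ k : ℤ, -(N:ℤ) ≤ k ∧ k + 1 ≤ (N:ℤ) ∧ (2:ℝ) ^ k ≤ u ∧ u ≤ (2:ℝ) ^ (k+1) := by
    rcases le_or_gt (Int.log 2 u) ((N:ℤ) - 1) with hle | hlt
    · exact ⟨Int.log 2 u, hloglb, by omega, hlog1, hlog2.le⟩
    · refine ⟨(N:ℤ) - 1, by omega, by omega, ?_,
        by rw [show (N:ℤ) - 1 + 1 = (N:ℤ) from by ring]; exact h2⟩
      calc (2:ℝ) ^ ((N:ℤ)-1) ≤ (2:ℝ) ^ (Int.log 2 u) :=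
            zpow_le_zpow_right₀ (by norm_num) (by omega)
        _ ≤ u := hlog1
  obtain ⟨k, hklb, hkub, hk1, hk2⟩ := hkey
  have hpair : ({k, k+1} : Finset ℤ) ⊆ S := by
    have h1m : k ∈ Finset.Icc (-(N:ℤ)) (N:ℤ) := Finset.mem_Icc.2 ⟨by omega, by omega⟩
    have h2m : k + 1 ∈ Finset.Icc (-(N:ℤ)) (N:ℤ) := Finset.mem_Icc.2 ⟨by omega, by omega⟩
    intro j hj
    rcases Finset.mem_insert.1 hj with rfl | hj'
    · exact hsub h1m
    · rw [Finset.mem_singleton] at hj'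
      rw [hj']
      exact hsub h2m
  calc (1:ℝ) = rLam k u + rLam (k+1) u := (rLam_pair hk1 hk2).symm
    _ = ∑ j ∈ ({k, k+1} : Finset ℤ), rLam j u :=
        (Finset.sum_pair (f := fun j => rLam j u) (show k ≠ k + 1 from by omega)).symm
    _ ≤ ∑ j ∈ S, rLam j u :=
        Finset.sum_le_sum_of_subset_of_nonneg hpair (fun j _ _ => rLam_nonneg j u)

lemma gammaS_osc (S : Finset ℤ) {s t : ℝ} (hs : 0 ≤ s) (hst : s ≤ t) :
    |(∑ j ∈ S, rLam j t) - ∑ j ∈ S, rLam j s| * s ≤ 8 * (t - s) := by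
  have hts : (0:ℝ) ≤ t - s := by linarith
  rcases eq_or_lt_of_le hs with h0 | h0
  · rw [← h0, mul_zero]; nlinarith
  set L := Int.log 2 s with hL
  have hs1 : (2:ℝ) ^ L ≤ s := by
    have := Int.zpow_log_le_self (b := 2) (by norm_num) h0
    push_cast at this; exact this
  have hs2 : s < (2:ℝ) ^ (L + 1) := by
    have := Int.lt_zpow_succ_log_self (b := 2) (by norm_num) s
    push_cast at this; exact this
  classical
  set T := S.filter (fun j => ¬ (2:ℝ) ^ (j+1) ≤ s) with hT
  have hsum : (∑ j ∈ S, rLam j t) - ∑ j ∈ S, rLam j s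
      = ∑ j ∈ T, (rLam j t - rLam j s) := by
    rw [← Finset.sum_sub_distrib]
    apply (Finset.sum_subset (Finset.filter_subset _ _) ?_).symm
    intro j hj hj'
    have hle : (2:ℝ) ^ (j+1) ≤ s := by
      by_contra hc
      exact hj' (Finset.mem_filter.2 ⟨hj, hc⟩)
    rw [rLam_zero_right hle, rLam_zero_right (hle.trans hst), sub_zero]
  have hTL : ∀ j ∈ T, L ≤ j := by
    intro j hj
    have hc : ¬ (2:ℝ) ^ (j+1) ≤ s := (Finset.mem_filter.1 hj).2
    push_neg at hc
    have : (2:ℝ) ^ L < (2:ℝ) ^ (j + 1) := lt_of_le_of_lt hs1 hc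
    have := (zpow_lt_zpow_iff_right₀ (by norm_num : (1:ℝ) < 2)).1 this
    omega
  have hterm : ∀ j ∈ T, |rLam j t - rLam j s| * s ≤ (4 * (2:ℝ) ^ (L - j)) * (t - s) := by
    intro j hj
    have hc : ¬ (2:ℝ) ^ (j+1) ≤ s := (Finset.mem_filter.1 hj).2
    push_neg at hc
    have hb1 : |rLam j t - rLam j s| * s ≤ ((2:ℝ) ^ (1-j) * (t - s)) * s :=
      mul_le_mul_of_nonneg_right (rLam_lip j hst) hs
    have hb2 : ((2:ℝ) ^ (1-j) * (t - s)) * s = ((2:ℝ) ^ (1-j) * s) * (t - s) := by ring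
    have hb3 : (2:ℝ) ^ (1-j) * s ≤ (2:ℝ) ^ (1-j) * (2:ℝ) ^ (L+1) := by
      exact mul_le_mul_of_nonneg_left hs2.le (two_zpow_pos _).le
    have hb4 : (2:ℝ) ^ (1-j) * (2:ℝ) ^ (L+1) = 4 * (2:ℝ) ^ (L - j) := by
      rw [zpow_two_mul_eq, show (1 - j) + (L + 1) = 2 + (L - j) from by ring,
        ← zpow_two_mul_eq]
      norm_num
    calc |rLam j t - rLam j s| * s ≤ ((2:ℝ) ^ (1-j) * s) * (t - s) :=
        hb1.trans_eq hb2
      _ ≤ (4 * (2:ℝ) ^ (L - j)) * (t - s) := by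
          apply mul_le_mul_of_nonneg_right _ hts
          rw [← hb4]; exact hb3
  calc |(∑ j ∈ S, rLam j t) - ∑ j ∈ S, rLam j s| * s
      = |∑ j ∈ T, (rLam j t - rLam j s)| * s := by rw [hsum]
    _ ≤ (∑ j ∈ T, |rLam j t - rLam j s|) * s :=
        mul_le_mul_of_nonneg_right (Finset.abs_sum_le_sum_abs _ _) hs
    _ = ∑ j ∈ T, |rLam j t - rLam j s| * s := by rw [Finset.sum_mul]
    _ ≤ ∑ j ∈ T, (4 * (2:ℝ) ^ (L - j)) * (t - s) := Finset.sum_le_sum hterm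
    _ = (4 * ∑ j ∈ T, (2:ℝ) ^ (L - j)) * (t - s) := by
        rw [← Finset.sum_mul, ← Finset.mul_sum]
    _ ≤ (4 * 2) * (t - s) := by
        apply mul_le_mul_of_nonneg_right _ hts
        have := geom_sum_le T L hTL
        linarith
    _ = 8 * (t - s) := by ring

end TentSum
section Multiplier
variable {M : Type*} [MetricSpace M] {base : M}

lemma cutoff_pointwise (f : Lip0 M base) (γ : ℝ → ℝ) (c : ℝ) (hc : 0 ≤ c)
    (hb : ∀ u, 0 ≤ u → |γ u| ≤ 1)
    (hosc : ∀ s t : ℝ, 0 ≤ s → s ≤ t → |γ t - γ s| * s ≤ c * (t - s))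
    (x y : M) (hxy : dist y base ≤ dist x base) :
    |f x * γ (dist x base) - f y * γ (dist y base)| ≤ ((1 + c) * ‖f‖) * dist x y := by
  have hdec : f x * γ (dist x base) - f y * γ (dist y base)
      = γ (dist x base) * (f x - f y) + f y * (γ (dist x base) - γ (dist y base)) := by
    ring
  rw [hdec]
  have h1 : |γ (dist x base) * (f x - f y)| ≤ ‖f‖ * dist x y := by
    rw [abs_mul]
    calc |γ (dist x base)| * |f x - f y| ≤ 1 * |f x - f y| :=
        mul_le_mul_of_nonneg_right (hb _ dist_nonneg) (abs_nonneg _)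
      _ = |f x - f y| := one_mul _
      _ ≤ ‖f‖ * dist x y := lip0_dist_le f x y
  have h2 : |f y * (γ (dist x base) - γ (dist y base))| ≤ ‖f‖ * (c * dist x y) := by
    rw [abs_mul]
    have hvy : |f y| ≤ ‖f‖ * dist y base := lip0_val_le f y
    have hosc' : |γ (dist x base) - γ (dist y base)| * dist y base
        ≤ c * (dist x base - dist y base) := hosc _ _ dist_nonneg hxy
    have hdd : dist x base - dist y base ≤ dist x y := by
      have := abs_dist_sub_le x y base
      rw [abs_le] at this
      linarith [this.2]
    calc |f y| * |γ (dist x base) - γ (dist y base)|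
        ≤ (‖f‖ * dist y base) * |γ (dist x base) - γ (dist y base)| :=
          mul_le_mul_of_nonneg_right hvy (abs_nonneg _)
      _ = ‖f‖ * (|γ (dist x base) - γ (dist y base)| * dist y base) := by ring
      _ ≤ ‖f‖ * (c * (dist x base - dist y base)) :=
          mul_le_mul_of_nonneg_left hosc' (norm_nonneg f)
      _ ≤ ‖f‖ * (c * dist x y) := by
          apply mul_le_mul_of_nonneg_left _ (norm_nonneg f)
          exact mul_le_mul_of_nonneg_left hdd hc
  calc |γ (dist x base) * (f x - f y) + f y * (γ (dist x base) - γ (dist y base))|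
      ≤ |γ (dist x base) * (f x - f y)| + |f y * (γ (dist x base) - γ (dist y base))| :=
        abs_add_le _ _
    _ ≤ ‖f‖ * dist x y + ‖f‖ * (c * dist x y) := add_le_add h1 h2
    _ = ((1 + c) * ‖f‖) * dist x y := by ring

lemma cutoff_pointwise' (f : Lip0 M base) (γ : ℝ → ℝ) (c : ℝ) (hc : 0 ≤ c)
    (hb : ∀ u, 0 ≤ u → |γ u| ≤ 1)
    (hosc : ∀ s t : ℝ, 0 ≤ s → s ≤ t → |γ t - γ s| * s ≤ c * (t - s))
    (x y : M) :
    |f x * γ (dist x base) - f y * γ (dist y base)| ≤ ((1 + c) * ‖f‖) * dist x y := by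
  rcases le_total (dist y base) (dist x base) with h | h
  · exact cutoff_pointwise f γ c hc hb hosc x y h
  · rw [abs_sub_comm, dist_comm x y]
    exact cutoff_pointwise f γ c hc hb hosc y x h

lemma cutoff_norm_le (f : Lip0 M base) (γ : ℝ → ℝ) (c : ℝ) (hc : 0 ≤ c)
    (hb : ∀ u, 0 ≤ u → |γ u| ≤ 1)
    (hosc : ∀ s t : ℝ, 0 ≤ s → s ≤ t → |γ t - γ s| * s ≤ c * (t - s))
    (g : Lip0 M base) (hg : ∀ x, g x = f x * γ (dist x base)) :
    ‖g‖ ≤ (1 + c) * ‖f‖ := by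
  apply lip0_norm_le (by positivity)
  intro x y
  rw [hg, hg]
  exact cutoff_pointwise' f γ c hc hb hosc x y

/-- Multiplication of `f` by the plateau `Π_n`, as an element of `Lip0`. -/
noncomputable def mulPla (base : M) (n : ℕ) (f : Lip0 M base) : Lip0 M base :=
  lip0Mk base (fun x => f x * rPla n (dist x base)) (3 * ‖f‖)
    (by
      intro x y
      have := cutoff_pointwise' f (rPla n) 2 (by norm_num)
        (fun u hu => by
          rw [abs_of_nonneg (rPla_nonneg n u)]; exact rPla_le_one n u)
        (fun s t hs hst => rPla_osc n hs hst) x y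
      calc |f x * rPla n (dist x base) - f y * rPla n (dist y base)|
          ≤ ((1 + 2) * ‖f‖) * dist x y := this
        _ = 3 * ‖f‖ * dist x y := by ring)
    (by simp [f.prop.2])

@[simp] lemma mulPla_apply (n : ℕ) (f : Lip0 M base) (x : M) :
    mulPla base n f x = f x * rPla n (dist x base) := rfl

lemma mulPla_norm_le (n : ℕ) (f : Lip0 M base) : ‖mulPla base n f‖ ≤ 3 * ‖f‖ :=
  lip0Mk_norm_le base _ _ (by positivity) _ _

end Multiplier
section PosPart
variable {M : Type*} [MetricSpace M] {base : M}

/-- Positive part of an element of `Lip0`. -/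
noncomputable def lip0Pos (g : Lip0 M base) : Lip0 M base :=
  lip0Mk base (fun x => max (g x) 0) ‖g‖
    (fun x y => (abs_max_sub_max_le_abs _ _ _).trans (lip0_dist_le g x y))
    (by simp [g.prop.2])

@[simp] lemma lip0Pos_apply (g : Lip0 M base) (x : M) :
    lip0Pos g x = max (g x) 0 := rfl

lemma lip0Pos_norm_le (g : Lip0 M base) : ‖lip0Pos g‖ ≤ ‖g‖ :=
  lip0Mk_norm_le base _ _ (norm_nonneg g) _ _

lemma lip0Pos_sub (g : Lip0 M base) : lip0Pos g - lip0Pos (-g) = g := by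
  apply lip0_ext
  intro x
  rw [lip0_sub_apply, lip0Pos_apply, lip0Pos_apply, lip0_neg_apply]
  exact max_zero_sub_max_neg_zero_eq_self (g x)

/-- If `φ` is normal, then `φ(u Π_m) → φ(u)` for nonnegative `u`. -/
lemma truncation_tendsto (φ : StrongDual ℝ (Lip0 M base)) (hφ : IsNormal base φ)
    (u : Lip0 M base) (hu : ∀ x, 0 ≤ u x) :
    Tendsto (fun m : ℕ => φ (mulPla base m u)) atTop (𝓝 (φ u)) := by
  apply hφ ℕ (fun m => mulPla base m u) u (3 * ‖u‖) (fun m => mulPla_norm_le m u)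
  · left
    intro x
    intro m₁ m₂ h
    simp only [mulPla_apply]
    exact mul_le_mul_of_nonneg_left (rPla_mono dist_nonneg h) (hu x)
  · intro x
    rcases eq_or_lt_of_le (dist_nonneg : (0:ℝ) ≤ dist x base) with h0 | h0
    · have hx : u x = 0 := by
        have : x = base := dist_eq_zero.1 h0.symm
        rw [this]; exact u.prop.2
      have : ∀ m : ℕ, mulPla base m u x = u x := by
        intro m; simp [hx]
      simp only [this]
      exact tendsto_const_nhds
    · obtain ⟨m₀, hm₀⟩ := pow_unbounded_of_one_lt
        (max (dist x base) (dist x base)⁻¹) (one_lt_two (α := ℝ))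
      apply tendsto_atTop_of_eventually_const (i₀ := m₀)
      intro m hm
      have hpow : max (dist x base) (dist x base)⁻¹ < (2:ℝ) ^ m := by
        calc _ < (2:ℝ) ^ m₀ := hm₀
          _ ≤ (2:ℝ) ^ m := pow_le_pow_right₀ (by norm_num) hm
      have h1 : dist x base ≤ (2:ℝ) ^ (m:ℤ) := by
        rw [zpow_natCast]
        exact ((le_max_left _ _).trans_lt hpow).le
      have h2 : (2:ℝ) ^ (-(m:ℤ)) ≤ dist x base := by
        rw [zpow_neg, zpow_natCast]
        rw [inv_le_comm₀ (by positivity) h0]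
        exact ((le_max_right _ _).trans_lt hpow).le
      simp [rPla_eq_one h2 h1]

end PosPart

section DisjSum
variable {M : Type*} [MetricSpace M] {base : M}

/-- Pointwise Lipschitz bound for sums of functions with pairwise disjoint supports. -/
lemma disj_sum_bound (w : ℕ → Lip0 M base) (c : ℝ) (hc : 0 ≤ c) (hn : ∀ k, ‖w k‖ ≤ c)
    (hdisj : ∀ k l, k ≠ l → ∀ x, w k x = 0 ∨ w l x = 0)
    (F : Finset ℕ) (x y : M) :
    |(∑ k ∈ F, w k x) - ∑ k ∈ F, w k y| ≤ (2 * c) * dist x y := by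
  classical
  have hterm : ∀ k x y, |w k x - w k y| ≤ c * dist x y := fun k x y =>
    (lip0_dist_le (w k) x y).trans
      (mul_le_mul_of_nonneg_right (hn k) dist_nonneg)
  by_cases hx : ∃ k ∈ F, w k x ≠ 0
  · obtain ⟨k₀, hk₀F, hk₀⟩ := hx
    have hsx : ∑ k ∈ F, w k x = w k₀ x :=
      Finset.sum_eq_single_of_mem k₀ hk₀F (fun b _ hb =>
        ((hdisj b k₀ hb x).resolve_right hk₀))
    by_cases hy : ∃ l ∈ F, w l y ≠ 0
    · obtain ⟨l₀, hl₀F, hl₀⟩ := hy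
      have hsy : ∑ k ∈ F, w k y = w l₀ y :=
        Finset.sum_eq_single_of_mem l₀ hl₀F (fun b _ hb =>
          ((hdisj b l₀ hb y).resolve_right hl₀))
      rw [hsx, hsy]
      rcases eq_or_ne k₀ l₀ with rfl | hne
      · calc |w k₀ x - w k₀ y| ≤ c * dist x y := hterm k₀ x y
          _ ≤ (2 * c) * dist x y := by nlinarith [dist_nonneg (x := x) (y := y)]
      · have h1 : w k₀ y = 0 := (hdisj k₀ l₀ hne y).resolve_right hl₀
        have h2 : w l₀ x = 0 := (hdisj k₀ l₀ hne x).resolve_left hk₀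
        have hrw : w k₀ x - w l₀ y = (w k₀ x - w k₀ y) + (w l₀ x - w l₀ y) := by
          rw [h1, h2]; ring
        rw [hrw]
        calc |(w k₀ x - w k₀ y) + (w l₀ x - w l₀ y)|
            ≤ |w k₀ x - w k₀ y| + |w l₀ x - w l₀ y| := abs_add_le _ _
          _ ≤ c * dist x y + c * dist x y := add_le_add (hterm k₀ x y) (hterm l₀ x y)
          _ = (2 * c) * dist x y := by ring
    · push_neg at hy
      have hsy : ∑ k ∈ F, w k y = 0 := Finset.sum_eq_zero (fun k hk => hy k hk)
      rw [hsx, hsy, sub_zero]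
      have h1 : w k₀ y = 0 := hy k₀ hk₀F
      calc |w k₀ x| = |w k₀ x - w k₀ y| := by rw [h1, sub_zero]
        _ ≤ c * dist x y := hterm k₀ x y
        _ ≤ (2 * c) * dist x y := by nlinarith [dist_nonneg (x := x) (y := y)]
  · push_neg at hx
    have hsx : ∑ k ∈ F, w k x = 0 := Finset.sum_eq_zero (fun k hk => hx k hk)
    by_cases hy : ∃ l ∈ F, w l y ≠ 0
    · obtain ⟨l₀, hl₀F, hl₀⟩ := hy
      have hsy : ∑ k ∈ F, w k y = w l₀ y :=
        Finset.sum_eq_single_of_mem l₀ hl₀F (fun b _ hb =>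
          ((hdisj b l₀ hb y).resolve_right hl₀))
      rw [hsx, hsy, zero_sub, abs_neg]
      have h1 : w l₀ x = 0 := hx l₀ hl₀F
      calc |w l₀ y| = |w l₀ y - w l₀ x| := by rw [h1, sub_zero]
        _ ≤ c * dist y x := hterm l₀ y x
        _ ≤ (2 * c) * dist x y := by
            rw [dist_comm y x]; nlinarith [dist_nonneg (x := x) (y := y)]
    · push_neg at hy
      have hsy : ∑ k ∈ F, w k y = 0 := Finset.sum_eq_zero (fun k hk => hy k hk)
      rw [hsx, hsy, sub_zero, abs_zero]
      positivity

end DisjSum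
section DisjLimit
variable {M : Type*} [MetricSpace M] {base : M}

open Classical in
/-- The pointwise sum of a disjointly supported family. -/
noncomputable def disjSumFun (w : ℕ → Lip0 M base) (x : M) : ℝ :=
  if h : ∃ k, w k x ≠ 0 then w h.choose x else 0

lemma disjSumFun_eq (w : ℕ → Lip0 M base)
    (hdisj : ∀ k l, k ≠ l → ∀ x, w k x = 0 ∨ w l x = 0)
    {k : ℕ} {x : M} (hk : w k x ≠ 0) : disjSumFun w x = w k x := by
  have h : ∃ j, w j x ≠ 0 := ⟨k, hk⟩
  rw [disjSumFun, dif_pos h]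
  rcases eq_or_ne h.choose k with he | he
  · rw [he]
  · rcases hdisj h.choose k he x with h1 | h1
    · exact absurd h1 h.choose_spec
    · exact absurd h1 hk

lemma disjSumFun_eq_zero (w : ℕ → Lip0 M base) {x : M}
    (hx : ∀ k, w k x = 0) : disjSumFun w x = 0 := by
  rw [disjSumFun, dif_neg]
  push_neg
  exact hx

lemma disjSumFun_finsum (w : ℕ → Lip0 M base)
    (hdisj : ∀ k l, k ≠ l → ∀ x, w k x = 0 ∨ w l x = 0) (x : M) :
    ∃ F : Finset ℕ, ∀ G : Finset ℕ, F ⊆ G → ∑ k ∈ G, w k x = disjSumFun w x := by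
  classical
  by_cases hx : ∃ k, w k x ≠ 0
  · refine ⟨{hx.choose}, fun G hFG => ?_⟩
    rw [disjSumFun_eq w hdisj hx.choose_spec]
    apply Finset.sum_eq_single_of_mem _ (hFG (Finset.mem_singleton_self _))
    intro b _ hb
    exact (hdisj b hx.choose hb x).resolve_right hx.choose_spec
  · push_neg at hx
    refine ⟨∅, fun G _ => ?_⟩
    rw [disjSumFun_eq_zero w hx]
    exact Finset.sum_eq_zero (fun k _ => hx k)

lemma disjSumFun_lip (w : ℕ → Lip0 M base) (c : ℝ) (hc : 0 ≤ c) (hn : ∀ k, ‖w k‖ ≤ c)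
    (hdisj : ∀ k l, k ≠ l → ∀ x, w k x = 0 ∨ w l x = 0) (x y : M) :
    |disjSumFun w x - disjSumFun w y| ≤ (2 * c) * dist x y := by
  obtain ⟨Fx, hFx⟩ := disjSumFun_finsum w hdisj x
  obtain ⟨Fy, hFy⟩ := disjSumFun_finsum w hdisj y
  rw [← hFx (Fx ∪ Fy) Finset.subset_union_left, ← hFy (Fx ∪ Fy) Finset.subset_union_right]
  exact disj_sum_bound w c hc hn hdisj (Fx ∪ Fy) x y

lemma disjSumFun_base (w : ℕ → Lip0 M base) : disjSumFun w base = 0 :=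
  disjSumFun_eq_zero w (fun k => (w k).prop.2)

/-- The limit element of `Lip0` for a disjointly supported family. -/
noncomputable def disjLimit (w : ℕ → Lip0 M base) (c : ℝ) (hc : 0 ≤ c)
    (hn : ∀ k, ‖w k‖ ≤ c) (hdisj : ∀ k l, k ≠ l → ∀ x, w k x = 0 ∨ w l x = 0) :
    Lip0 M base :=
  lip0Mk base (disjSumFun w) (2 * c) (disjSumFun_lip w c hc hn hdisj) (disjSumFun_base w)

lemma partial_tendsto_disjLimit (w : ℕ → Lip0 M base)
    (hdisj : ∀ k l, k ≠ l → ∀ x, w k x = 0 ∨ w l x = 0) (x : M) :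
    Tendsto (fun K : ℕ => (∑ k ∈ Finset.range K, w k) x) atTop (𝓝 (disjSumFun w x)) := by
  classical
  have hval : ∀ K : ℕ, (∑ k ∈ Finset.range K, w k) x = ∑ k ∈ Finset.range K, w k x :=
    fun K => lip0_sum_apply _ _ x
  by_cases hx : ∃ k, w k x ≠ 0
  · obtain ⟨k₀, hk₀⟩ := hx
    apply tendsto_atTop_of_eventually_const (i₀ := k₀ + 1)
    intro K hK
    rw [hval, disjSumFun_eq w hdisj hk₀]
    apply Finset.sum_eq_single_of_mem _ (Finset.mem_range.2 (by omega))
    intro b _ hb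
    exact (hdisj b k₀ hb x).resolve_right hk₀
  · push_neg at hx
    apply tendsto_atTop_of_eventually_const (i₀ := 0)
    intro K _
    rw [hval, disjSumFun_eq_zero w hx]
    exact Finset.sum_eq_zero (fun k _ => hx k)

lemma no_tendsto_of_big (c : ℕ → ℝ) (δ L : ℝ) (hδ : 0 < δ) (hb : ∀ k, δ ≤ c k)
    (hL : Tendsto (fun K : ℕ => ∑ k ∈ Finset.range K, c k) atTop (𝓝 L)) : False := by
  rw [Metric.tendsto_atTop] at hL
  obtain ⟨K₀, hK₀⟩ := hL 1 one_pos
  obtain ⟨K₁, hK₁⟩ := exists_nat_gt ((L + 1) / δ)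
  set K := max K₀ K₁ with hK
  have h1 : ∑ k ∈ Finset.range K, c k < L + 1 := by
    have := hK₀ K (le_max_left _ _)
    rw [Real.dist_eq, abs_lt] at this
    linarith [this.2]
  have h2 : (K:ℝ) * δ ≤ ∑ k ∈ Finset.range K, c k := by
    have := Finset.card_nsmul_le_sum (Finset.range K) c δ (fun k _ => hb k)
    rwa [Finset.card_range, nsmul_eq_mul] at this
  have h3 : (L + 1) / δ < (K:ℝ) := lt_of_lt_of_le hK₁ (by exact_mod_cast le_max_right K₀ K₁)
  rw [div_lt_iff₀ hδ] at h3
  linarith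

end DisjLimit
section Crux
variable {M : Type*} [MetricSpace M] {base : M}

lemma crux_unit (φ : StrongDual ℝ (Lip0 M base)) (hφ : IsNormal base φ)
    {ε : ℝ} (hε : 0 < ε) :
    ∃ N : ℕ, ∀ g : Lip0 M base, ‖g‖ ≤ 1 →
      (∀ x, (2:ℝ) ^ (-(N:ℤ)) ≤ dist x base → dist x base ≤ (2:ℝ) ^ ((N:ℤ)) → g x = 0) →
      |φ g| ≤ ε := by
  by_contra hcon
  push_neg at hcon
  -- Step: produce, for each `N`, a nonnegative compactly supported `v` avoiding the
  -- annulus `[2^{-N}, 2^N]` with `|φ v| > ε/4`.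
  have step : ∀ N : ℕ, ∃ (m : ℕ) (v : Lip0 M base), N ≤ m ∧ (∀ x, 0 ≤ v x) ∧ ‖v‖ ≤ 3 ∧
      ε/4 < |φ v| ∧
      ∀ x, v x ≠ 0 → ((2:ℝ) ^ (-(m:ℤ)-1) ≤ dist x base ∧
        dist x base ≤ (2:ℝ) ^ ((m:ℤ)+1) ∧
        (dist x base < (2:ℝ) ^ (-(N:ℤ)) ∨ (2:ℝ) ^ ((N:ℤ)) < dist x base)) := by
    intro N
    obtain ⟨g, hg1, hg2, hg3⟩ := hcon N
    -- pick the positive or the negative part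
    have hdecomp : φ (lip0Pos g) - φ (lip0Pos (-g)) = φ g := by
      rw [← map_sub, lip0Pos_sub]
    have hor : ε/2 < |φ (lip0Pos g)| ∨ ε/2 < |φ (lip0Pos (-g))| := by
      by_contra hc
      push_neg at hc
      have habs : |φ g| ≤ |φ (lip0Pos g)| + |φ (lip0Pos (-g))| := by
        rw [← hdecomp]; exact abs_sub _ _
      linarith [hc.1, hc.2]
    obtain ⟨u, hu0, hun, huv, huφ⟩ :
        ∃ u : Lip0 M base, (∀ x, 0 ≤ u x) ∧ ‖u‖ ≤ 1 ∧
          (∀ x, (2:ℝ) ^ (-(N:ℤ)) ≤ dist x base → dist x base ≤ (2:ℝ) ^ ((N:ℤ)) → u x = 0) ∧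
          ε/2 < |φ u| := by
      rcases hor with h | h
      · exact ⟨lip0Pos g, fun x => le_max_right _ _, (lip0Pos_norm_le g).trans hg1,
          fun x h1 h2 => by rw [lip0Pos_apply, hg2 x h1 h2]; simp, h⟩
      · refine ⟨lip0Pos (-g), fun x => le_max_right _ _, ?_, ?_, h⟩
        · calc ‖lip0Pos (-g)‖ ≤ ‖-g‖ := lip0Pos_norm_le (-g)
            _ = ‖g‖ := norm_neg g
            _ ≤ 1 := hg1
        · intro x h1 h2
          rw [lip0Pos_apply, lip0_neg_apply, hg2 x h1 h2]
          simp
    -- truncate `u`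
    have htr := truncation_tendsto φ hφ u hu0
    rw [Metric.tendsto_atTop] at htr
    obtain ⟨m₁, hm₁⟩ := htr (ε/4) (by linarith)
    set m := max m₁ N with hm
    have hdist := hm₁ m (le_max_left _ _)
    rw [Real.dist_eq] at hdist
    refine ⟨m, mulPla base m u, le_max_right _ _,
      fun x => mul_nonneg (hu0 x) (rPla_nonneg _ _), ?_, ?_, ?_⟩
    · calc ‖mulPla base m u‖ ≤ 3 * ‖u‖ := mulPla_norm_le m u
        _ ≤ 3 := by linarith
    · have h1 : |φ u| - |φ (mulPla base m u)| ≤ |φ (mulPla base m u) - φ u| := by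
        rw [abs_sub_comm]
        exact abs_sub_abs_le_abs_sub _ _
      linarith
    · intro x hx
      rw [mulPla_apply] at hx
      have hu : u x ≠ 0 := fun h => hx (by rw [h, zero_mul])
      have hr : rPla m (dist x base) ≠ 0 := fun h => hx (by rw [h, mul_zero])
      refine ⟨?_, ?_, ?_⟩
      · by_contra hc
        push_neg at hc
        exact hr (rPla_eq_zero_left hc.le)
      · by_contra hc
        push_neg at hc
        exact hr (rPla_eq_zero_right hc.le)
      · by_contra hc
        push_neg at hc
        exact hu (huv x hc.1 hc.2)
  -- choose the data
  choose mfun vfun hmge hpos hnorm hval hsupp using step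
  -- the recursively defined scales
  set Nseq : ℕ → ℕ := fun k => Nat.rec 0 (fun _ prev => mfun prev + 2) k with hNseq
  have hNseq_succ : ∀ k, Nseq (k+1) = mfun (Nseq k) + 2 := fun k => rfl
  have hNseq_mono : Monotone Nseq := by
    apply monotone_nat_of_le_succ
    intro k
    have := hmge (Nseq k)
    rw [hNseq_succ]
    omega
  set w : ℕ → Lip0 M base := fun k => vfun (Nseq k) with hw
  have hdisj0 : ∀ k l, k < l → ∀ x, w k x = 0 ∨ w l x = 0 := by
    intro k l hkl x
    by_contra hc
    push_neg at hc
    obtain ⟨h1, h2⟩ := hc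
    obtain ⟨ha1, ha2, _⟩ := hsupp (Nseq k) x h1
    obtain ⟨_, _, hb3⟩ := hsupp (Nseq l) x h2
    have hN : (mfun (Nseq k) : ℤ) + 2 ≤ (Nseq l : ℤ) := by
      have h := hNseq_mono (show k + 1 ≤ l from by omega)
      rw [hNseq_succ] at h
      exact_mod_cast h
    rcases hb3 with hlt | hgt
    · have : (2:ℝ) ^ (-(Nseq l:ℤ)) ≤ (2:ℝ) ^ (-(mfun (Nseq k):ℤ)-1) :=
        zpow_le_zpow_right₀ (by norm_num) (by omega)
      linarith
    · have : (2:ℝ) ^ ((mfun (Nseq k):ℤ)+1) ≤ (2:ℝ) ^ ((Nseq l:ℤ)) :=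
        zpow_le_zpow_right₀ (by norm_num) (by omega)
      linarith
  have hdisj : ∀ k l, k ≠ l → ∀ x, w k x = 0 ∨ w l x = 0 := by
    intro k l hne x
    rcases lt_or_gt_of_ne hne with h | h
    · exact hdisj0 k l h x
    · exact (hdisj0 l k h x).symm
  -- pigeonhole the sign
  obtain ⟨σ, e, hσ, hinj, hsig⟩ :
      ∃ (σ : ℝ) (e : ℕ → ℕ), (σ = 1 ∨ σ = -1) ∧ Function.Injective e ∧
        ∀ k, ε/4 < σ * φ (w (e k)) := by
    set P : Set ℕ := {k | ε/4 < φ (w k)} with hP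
    set Q : Set ℕ := {k | ε/4 < -φ (w k)} with hQ
    have hcover : (Set.univ : Set ℕ) ⊆ P ∪ Q := by
      intro k _
      have := hval (Nseq k)
      rcases lt_abs.1 this with h | h
      · exact Or.inl h
      · exact Or.inr h
    have hPQ : P.Infinite ∨ Q.Infinite := by
      by_contra hc
      push_neg at hc
      exact (Set.Infinite.mono hcover Set.infinite_univ)
        (hc.1.union hc.2)
    rcases hPQ with h | h
    · refine ⟨1, fun n => ((Set.Infinite.natEmbedding P h) n : ℕ), Or.inl rfl,
        fun a b hab => (Set.Infinite.natEmbedding P h).injective (Subtype.ext hab),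
        fun k => ?_⟩
      rw [one_mul]
      exact ((Set.Infinite.natEmbedding P h) k).prop
    · refine ⟨-1, fun n => ((Set.Infinite.natEmbedding Q h) n : ℕ), Or.inr rfl,
        fun a b hab => (Set.Infinite.natEmbedding Q h).injective (Subtype.ext hab),
        fun k => ?_⟩
      rw [neg_one_mul]
      exact ((Set.Infinite.natEmbedding Q h) k).prop
  -- the monotone sequence of partial sums
  set w' : ℕ → Lip0 M base := fun k => w (e k) with hw'
  have hdisj' : ∀ k l, k ≠ l → ∀ x, w' k x = 0 ∨ w' l x = 0 :=
    fun k l hne x => hdisj (e k) (e l) (fun hh => hne (hinj hh)) x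
  have hnorm' : ∀ k, ‖w' k‖ ≤ 3 := fun k => hnorm (Nseq (e k))
  set T : Lip0 M base := disjLimit w' 3 (by norm_num) hnorm' hdisj' with hT
  have htend : Tendsto (fun K : ℕ => φ (∑ k ∈ Finset.range K, w' k)) atTop (𝓝 (φ T)) := by
    apply hφ ℕ (fun K => ∑ k ∈ Finset.range K, w' k) T 6
    · intro K
      apply lip0_norm_le (by norm_num)
      intro x y
      rw [lip0_sum_apply, lip0_sum_apply]
      have := disj_sum_bound w' 3 (by norm_num) hnorm' hdisj' (Finset.range K) x y
      calc |(∑ k ∈ Finset.range K, w' k x) - ∑ k ∈ Finset.range K, w' k y|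
          ≤ (2 * 3) * dist x y := this
        _ = 6 * dist x y := by norm_num
    · left
      intro x K1 K2 hK
      simp only [lip0_sum_apply]
      apply Finset.sum_le_sum_of_subset_of_nonneg (Finset.range_subset_range.2 hK)
      intro k _ _
      exact hpos (Nseq (e k)) x
    · intro x
      exact partial_tendsto_disjLimit w' hdisj' x
  -- contradiction with divergence
  have hsum : ∀ K : ℕ, φ (∑ k ∈ Finset.range K, w' k) = ∑ k ∈ Finset.range K, φ (w' k) :=
    fun K => map_sum φ w' (Finset.range K)
  apply no_tendsto_of_big (fun k => σ * φ (w' k)) (ε/4) (σ * φ T) (by linarith)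
    (fun k => (hsig k).le)
  have : (fun K : ℕ => ∑ k ∈ Finset.range K, σ * φ (w' k))
      = fun K : ℕ => σ * φ (∑ k ∈ Finset.range K, w' k) := by
    funext K
    rw [hsum, Finset.mul_sum]
  rw [this]
  exact htend.const_mul σ

/-- Scaled version of the crux lemma. -/
lemma crux (φ : StrongDual ℝ (Lip0 M base)) (hφ : IsNormal base φ)
    {ε : ℝ} (hε : 0 < ε) :
    ∃ N : ℕ, ∀ g : Lip0 M base,
      (∀ x, (2:ℝ) ^ (-(N:ℤ)) ≤ dist x base → dist x base ≤ (2:ℝ) ^ ((N:ℤ)) → g x = 0) →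
      |φ g| ≤ ε * ‖g‖ := by
  obtain ⟨N, hN⟩ := crux_unit φ hφ hε
  refine ⟨N, fun g hg => ?_⟩
  rcases eq_or_ne ‖g‖ 0 with h0 | h0
  · have : g = 0 := norm_eq_zero.1 h0
    rw [this, map_zero, abs_zero]
    positivity
  · have hpos : 0 < ‖g‖ := lt_of_le_of_ne (norm_nonneg g) (Ne.symm h0)
    set g' : Lip0 M base := ‖g‖⁻¹ • g with hg'
    have hn : ‖g'‖ ≤ 1 := by
      rw [hg', norm_smul, norm_inv, norm_norm, inv_mul_cancel₀ h0]
    have hv : ∀ x, (2:ℝ) ^ (-(N:ℤ)) ≤ dist x base → dist x base ≤ (2:ℝ) ^ ((N:ℤ)) →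
        g' x = 0 := by
      intro x h1 h2
      rw [hg', lip0_smul_apply, hg x h1 h2, mul_zero]
    have := hN g' hn hv
    have hφg : φ g = ‖g‖ * φ g' := by
      rw [hg', map_smul, smul_eq_mul]
      field_simp
    rw [hφg, abs_mul, abs_of_nonneg (norm_nonneg g)]
    calc ‖g‖ * |φ g'| ≤ ‖g‖ * ε := mul_le_mul_of_nonneg_left this (norm_nonneg g)
      _ = ε * ‖g‖ := mul_comm _ _

end Crux
/-- if `φ` is normal, then `φ = Σ_{n∈ℤ} φ ∘ W_{Λ_n} = lim_n φ ∘ W_{Π_n}`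
in the norm of `F(M)** = Lip₀(M)*`. -/
theorem normal_decomposition [CompleteSpace M] (base : M)
    (φ : StrongDual ℝ (Lip0 M base)) (hφ : IsNormal base φ)
    (W : ℤ → (Lip0 M base →L[ℝ] Lip0 M base))
    (hW : ∀ (n : ℤ) (f : Lip0 M base) (x : M), (W n f) x = f x * Lam base n x)
    (WP : ℕ → (Lip0 M base →L[ℝ] Lip0 M base))
    (hWP : ∀ (n : ℕ) (f : Lip0 M base) (x : M), (WP n f) x = f x * Pla base n x) :
    HasSum (fun n : ℤ => φ.comp (W n)) φ ∧
      Tendsto (fun n : ℕ => φ.comp (WP n)) atTop (𝓝 φ) := by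

  constructor
  · -- the sum over tents
    have : Tendsto (fun S : Finset ℤ => ∑ n ∈ S, φ.comp (W n)) atTop (𝓝 φ) := by
      rw [Metric.tendsto_atTop]
      intro δ hδ
      obtain ⟨N₀, hN⟩ := crux φ hφ (show (0:ℝ) < δ/36 from by linarith)
      set N : ℕ := max N₀ 1 with hNdef
      refine ⟨Finset.Icc (-(N:ℤ)) (N:ℤ), fun S hS => ?_⟩
      rw [dist_eq_norm]
      have hbound : ‖(∑ n ∈ S, φ.comp (W n)) - φ‖ ≤ δ/4 := by
        apply ContinuousLinearMap.opNorm_le_bound _ (by linarith)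
        intro f
        have hval : ((∑ n ∈ S, φ.comp (W n)) - φ) f = φ ((∑ n ∈ S, W n f) - f) := by
          rw [ContinuousLinearMap.sub_apply, ContinuousLinearMap.sum_apply, map_sub]
          congr 1
          · simp only [ContinuousLinearMap.comp_apply]
            exact (map_sum φ (fun n => W n f) S).symm
        rw [hval]
        set g : Lip0 M base := (∑ n ∈ S, W n f) - f with hg
        have hgval : ∀ x, g x = f x * ((∑ j ∈ S, rLam j (dist x base)) - 1) := by
          intro x
          rw [hg, lip0_sub_apply, lip0_sum_apply]
          have hterm : ∑ n ∈ S, (W n f) x = ∑ n ∈ S, f x * rLam n (dist x base) :=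
            Finset.sum_congr rfl (fun n _ => by rw [hW n f x, Lam_eq])
          rw [hterm, ← Finset.mul_sum]
          ring
        have hnormg : ‖g‖ ≤ (1 + 8) * ‖f‖ := by
          apply cutoff_norm_le f (fun u => (∑ j ∈ S, rLam j u) - 1) 8 (by norm_num)
            ?_ ?_ g hgval
          · intro u hu
            rw [abs_le]
            constructor
            · have := gammaS_nonneg S (u := u); linarith
            · have := gammaS_le_one S hu; linarith
          · intro s t hs hst
            rw [sub_sub_sub_cancel_right]
            exact gammaS_osc S hs hst
        have hvanish : ∀ x, (2:ℝ) ^ (-(N₀:ℤ)) ≤ dist x base →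
            dist x base ≤ (2:ℝ) ^ ((N₀:ℤ)) → g x = 0 := by
          intro x h1 h2
          have hNN : (N₀:ℤ) ≤ (N:ℤ) := by
            have : N₀ ≤ N := le_max_left _ _
            exact_mod_cast this
          have h1' : (2:ℝ) ^ (-(N:ℤ)) ≤ dist x base :=
            le_trans (zpow_le_zpow_right₀ (by norm_num) (by omega)) h1
          have h2' : dist x base ≤ (2:ℝ) ^ ((N:ℤ)) :=
            h2.trans (zpow_le_zpow_right₀ (by norm_num) hNN)
          rw [hgval x, gammaS_eq_one (le_max_right N₀ 1) hS h1' h2']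
          ring
        calc ‖φ g‖ = |φ g| := rfl
          _ ≤ (δ/36) * ‖g‖ := hN g hvanish
          _ ≤ (δ/36) * ((1 + 8) * ‖f‖) := by
              apply mul_le_mul_of_nonneg_left hnormg (by linarith)
          _ = (δ/4) * ‖f‖ := by ring
      calc ‖(∑ n ∈ S, φ.comp (W n)) - φ‖ ≤ δ/4 := hbound
        _ < δ := by linarith
    exact this
  · -- the plateau limit
    rw [Metric.tendsto_atTop]
    intro δ hδ
    obtain ⟨N, hN⟩ := crux φ hφ (show (0:ℝ) < δ/12 from by linarith)
    refine ⟨N, fun n hn => ?_⟩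
    rw [dist_eq_norm]
    have hbound : ‖φ.comp (WP n) - φ‖ ≤ δ/4 := by
      apply ContinuousLinearMap.opNorm_le_bound _ (by linarith)
      intro f
      have hval : (φ.comp (WP n) - φ) f = φ (WP n f - f) := by
        rw [ContinuousLinearMap.sub_apply, ContinuousLinearMap.comp_apply, ← map_sub]
      rw [hval]
      set g : Lip0 M base := WP n f - f with hg
      have hgval : ∀ x, g x = f x * (rPla n (dist x base) - 1) := by
        intro x
        rw [hg, lip0_sub_apply, hWP n f x, Pla_eq]
        ring
      have hnormg : ‖g‖ ≤ (1 + 2) * ‖f‖ := by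
        apply cutoff_norm_le f (fun u => rPla n u - 1) 2 (by norm_num) ?_ ?_ g hgval
        · intro u hu
          rw [abs_le]
          constructor
          · have := rPla_nonneg n u; linarith
          · have := rPla_le_one n u; linarith
        · intro s t hs hst
          rw [sub_sub_sub_cancel_right]
          exact rPla_osc n hs hst
      have hvanish : ∀ x, (2:ℝ) ^ (-(N:ℤ)) ≤ dist x base →
          dist x base ≤ (2:ℝ) ^ ((N:ℤ)) → g x = 0 := by
        intro x h1 h2
        have hNn : (N:ℤ) ≤ (n:ℤ) := by exact_mod_cast hn
        have h1' : (2:ℝ) ^ (-(n:ℤ)) ≤ dist x base :=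
          le_trans (zpow_le_zpow_right₀ (by norm_num) (by omega)) h1
        have h2' : dist x base ≤ (2:ℝ) ^ ((n:ℤ)) :=
          h2.trans (zpow_le_zpow_right₀ (by norm_num) hNn)
        rw [hgval x, rPla_eq_one h1' h2']
        ring
      calc ‖φ g‖ = |φ g| := rfl
        _ ≤ (δ/12) * ‖g‖ := hN g hvanish
        _ ≤ (δ/12) * ((1 + 2) * ‖f‖) := by
            apply mul_le_mul_of_nonneg_left hnormg (by linarith)
        _ = (δ/4) * ‖f‖ := by ring
    calc ‖φ.comp (WP n) - φ‖ ≤ δ/4 := hbound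
      _ < δ := by linarith
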